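/- Let (X_ℓ : ℓ ≥ 1) be independent and identically distributed nonnegative real random variables with E[(log X₁)⁺] < ∞ and E[log X₁] < 0 (the expectation being allowed to equal −∞, with log 0 interpreted as −∞). Then the random series Σ_{k=0}^∞ Π_{ℓ=1}^{k} X_ℓ (with the empty product for k = 0 equal to 1) converges to a finite value almost surely. -/

import Mathlib

/-!
STATEMENT 0: If (X_ℓ) are i.i.d. nonnegative random variables with
E[(log X₁)⁺] < ∞ and E[log X₁] < 0 (possibly −∞, log 0 = −∞), then
Σ_{k=0}^∞ Π_{ℓ=1}^k X_ℓ converges (is summable) almost surely.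

The condition E[log X₁] < 0 (with the positive part finite) is encoded as
E[(log X₁)⁺] < E[(log X₁)⁻], where the negative part is taken to be +∞ on
the event {X₁ = 0} (corresponding to log 0 = −∞).
-/

open MeasureTheory ProbabilityTheory Filter
open scoped ENNReal

/-- The truncated log function: `log (max x e^{-M})`. -/
noncomputable def truncLog (M : ℕ) (x : ℝ) : ℝ := Real.log (max x (Real.exp (-(M : ℝ))))

lemma truncLog_measurable (M : ℕ) : Measurable (truncLog M) :=
  Real.measurable_log.comp (measurable_id.max measurable_const)

lemma truncLog_of_le {M : ℕ} {x : ℝ} (h : x ≤ Real.exp (-(M : ℝ))) :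
    truncLog M x = -(M : ℝ) := by
  rw [truncLog, max_eq_right h, Real.log_exp]

lemma truncLog_of_lt {M : ℕ} {x : ℝ} (h : Real.exp (-(M : ℝ)) < x) :
    truncLog M x = Real.log x := by
  rw [truncLog, max_eq_left h.le]

lemma ofReal_truncLog (M : ℕ) {x : ℝ} (hx : 0 ≤ x) :
    ENNReal.ofReal (truncLog M x) = ENNReal.ofReal (Real.log x) := by
  rcases le_or_gt x (Real.exp (-(M : ℝ))) with h | h
  · rw [truncLog_of_le h]
    rcases eq_or_lt_of_le hx with h0 | h0
    · rw [← h0]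
      simp [Real.log_zero, ENNReal.ofReal_of_nonpos (neg_nonpos.2 (Nat.cast_nonneg M) : (-(M:ℝ)) ≤ 0)]
    · have hlog : Real.log x ≤ -(M : ℝ) := by
        calc Real.log x ≤ Real.log (Real.exp (-(M : ℝ))) :=
              Real.log_le_log h0 h
          _ = -(M : ℝ) := Real.log_exp _
      rw [ENNReal.ofReal_of_nonpos (neg_nonpos.2 (Nat.cast_nonneg M) : (-(M:ℝ)) ≤ 0), ENNReal.ofReal_of_nonpos
        (hlog.trans (neg_nonpos.2 (Nat.cast_nonneg M)))]
  · rw [truncLog_of_lt h]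

lemma ofReal_neg_truncLog (M : ℕ) {x : ℝ} (hx : 0 ≤ x) :
    ENNReal.ofReal (-(truncLog M x)) =
      min (if x = 0 then ⊤ else ENNReal.ofReal (-Real.log x)) (M : ℝ≥0∞) := by
  rcases eq_or_lt_of_le hx with h0 | h0
  · rw [← h0]
    have : (0:ℝ) ≤ Real.exp (-(M : ℝ)) := (Real.exp_pos _).le
    rw [truncLog_of_le this]
    simp [ENNReal.ofReal_natCast]
  rcases le_or_gt x (Real.exp (-(M : ℝ))) with h | h
  · have hlog : (M : ℝ) ≤ -Real.log x := by
      have : Real.log x ≤ -(M : ℝ) := by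
        calc Real.log x ≤ Real.log (Real.exp (-(M : ℝ))) := Real.log_le_log h0 h
          _ = -(M : ℝ) := Real.log_exp _
      linarith
    rw [truncLog_of_le h, if_neg h0.ne', neg_neg, min_eq_right, ENNReal.ofReal_natCast]
    calc ((M : ℝ≥0∞)) = ENNReal.ofReal (M : ℝ) := (ENNReal.ofReal_natCast M).symm
      _ ≤ ENNReal.ofReal (-Real.log x) := ENNReal.ofReal_le_ofReal hlog
  · have hlog : -Real.log x ≤ (M : ℝ) := by
      have : -(M : ℝ) ≤ Real.log x := by
        calc -(M : ℝ) = Real.log (Real.exp (-(M : ℝ))) := (Real.log_exp _).symm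
          _ ≤ Real.log x := Real.log_le_log (Real.exp_pos _) h.le
      linarith
    rw [truncLog_of_lt h, if_neg h0.ne', min_eq_left]
    calc ENNReal.ofReal (-Real.log x) ≤ ENNReal.ofReal (M : ℝ) :=
          ENNReal.ofReal_le_ofReal hlog
      _ = (M : ℝ≥0∞) := ENNReal.ofReal_natCast M

lemma abs_truncLog_le (M : ℕ) {x : ℝ} (hx : 0 ≤ x) :
    |truncLog M x| ≤ max (Real.log x) 0 + M := by
  have hM : (0:ℝ) ≤ M := Nat.cast_nonneg M
  rcases le_or_gt x (Real.exp (-(M : ℝ))) with h | h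
  · rw [truncLog_of_le h, abs_neg, abs_of_nonneg hM]
    have : (0:ℝ) ≤ max (Real.log x) 0 := le_max_right _ _
    linarith
  · rw [truncLog_of_lt h]
    rcases le_or_gt 0 (Real.log x) with h1 | h1
    · rw [abs_of_nonneg h1]
      have : Real.log x ≤ max (Real.log x) 0 := le_max_left _ _
      linarith
    · rw [abs_of_neg h1]
      have : -(M : ℝ) ≤ Real.log x := by
        calc -(M : ℝ) = Real.log (Real.exp (-(M : ℝ))) := (Real.log_exp _).symm
          _ ≤ Real.log x := Real.log_le_log (Real.exp_pos _) h.le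
      have h2 : (0:ℝ) ≤ max (Real.log x) 0 := le_max_right _ _
      linarith

theorem stmt_0
    {Ω : Type*} [MeasurableSpace Ω] (μ : Measure Ω) [IsProbabilityMeasure μ]
    (X : ℕ → Ω → ℝ)
    (hmeas : ∀ ℓ, Measurable (X ℓ))
    (hpos : ∀ ℓ ω, 0 ≤ X ℓ ω)
    (hindep : iIndepFun X μ)
    (hid : ∀ ℓ, μ.map (X ℓ) = μ.map (X 0))
    (hlogplus : ∫⁻ ω, ENNReal.ofReal (Real.log (X 0 ω)) ∂μ < ⊤)
    (hlogneg : ∫⁻ ω, ENNReal.ofReal (Real.log (X 0 ω)) ∂μ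
      < ∫⁻ ω, (if X 0 ω = 0 then ⊤ else ENNReal.ofReal (-Real.log (X 0 ω))) ∂μ) :
    ∀ᵐ ω ∂μ, Summable (fun k => ∏ ℓ ∈ Finset.range k, X ℓ ω) := by
  set A : ℝ≥0∞ := ∫⁻ ω, ENNReal.ofReal (Real.log (X 0 ω)) ∂μ with hA
  set N : Ω → ℝ≥0∞ := fun ω =>
    if X 0 ω = 0 then ⊤ else ENNReal.ofReal (-Real.log (X 0 ω)) with hN
  have hNmeas : Measurable N := by
    apply Measurable.ite (measurableSet_eq_fun (hmeas 0) measurable_const)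
      measurable_const
    exact ENNReal.measurable_ofReal.comp ((Real.measurable_log.comp (hmeas 0)).neg)
  -- Step C: find M with A < ∫⁻ min (N ω) M
  have hsup : (⨆ M : ℕ, ∫⁻ ω, min (N ω) (M : ℝ≥0∞) ∂μ) = ∫⁻ ω, N ω ∂μ := by
    rw [← lintegral_iSup (fun M => hNmeas.min measurable_const)
      (fun M₁ M₂ h ω => min_le_min le_rfl (by exact_mod_cast Nat.cast_le.2 h))]
    congr 1
    ext ω
    rw [← inf_iSup_eq]
    simp [ENNReal.iSup_natCast]
  obtain ⟨M, hM⟩ : ∃ M : ℕ, A < ∫⁻ ω, min (N ω) (M : ℝ≥0∞) ∂μ := by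
    rw [← lt_iSup_iff, hsup]
    exact hlogneg
  set Y : ℕ → Ω → ℝ := fun ℓ ω => truncLog M (X ℓ ω) with hY
  have hYmeas : ∀ ℓ, Measurable (Y ℓ) := fun ℓ => (truncLog_measurable M).comp (hmeas ℓ)
  -- pos part of Y 0
  have hYpos : ∫⁻ ω, ENNReal.ofReal (Y 0 ω) ∂μ = A := by
    simp only [hY]
    exact lintegral_congr fun ω => ofReal_truncLog M (hpos 0 ω)
  have hYneg : ∫⁻ ω, ENNReal.ofReal (-(Y 0 ω)) ∂μ = ∫⁻ ω, min (N ω) (M : ℝ≥0∞) ∂μ := by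
    exact lintegral_congr fun ω => ofReal_neg_truncLog M (hpos 0 ω)
  have hBfin : ∫⁻ ω, min (N ω) (M : ℝ≥0∞) ∂μ < ⊤ := by
    calc ∫⁻ ω, min (N ω) (M : ℝ≥0∞) ∂μ ≤ ∫⁻ _, (M : ℝ≥0∞) ∂μ :=
          lintegral_mono fun ω => min_le_right _ _
      _ = M := by simp
      _ < ⊤ := ENNReal.natCast_lt_top M
  -- integrability of Y 0
  have hg'int : Integrable (fun ω => max (Real.log (X 0 ω)) 0) μ := by
    refine ⟨((Real.measurable_log.comp (hmeas 0)).max measurable_const).aestronglyMeasurable, ?_⟩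
    rw [HasFiniteIntegral]
    have : ∀ ω, ‖max (Real.log (X 0 ω)) 0‖ₑ
        = ENNReal.ofReal (Real.log (X 0 ω)) := by
      intro ω
      rw [Real.enorm_eq_ofReal (le_max_right _ _)]
      rcases le_or_gt (Real.log (X 0 ω)) 0 with h | h
      · rw [max_eq_right h, ENNReal.ofReal_of_nonpos h]
        simp
      · rw [max_eq_left h.le]
    simpa [this] using hlogplus
  have hYint : Integrable (Y 0) μ := by
    refine Integrable.mono' (hg'int.add (integrable_const (M : ℝ)))
      (hYmeas 0).aestronglyMeasurable ?_
    filter_upwards with ω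
    simpa using abs_truncLog_le M (hpos 0 ω)
  -- mean of Y 0 is negative
  have hmean : μ[Y 0] < 0 := by
    rw [integral_eq_lintegral_pos_part_sub_lintegral_neg_part hYint]
    simp only [hYpos]
    rw [sub_neg]
    calc A.toReal < (∫⁻ ω, min (N ω) (M : ℝ≥0∞) ∂μ).toReal :=
          ENNReal.toReal_strict_mono hBfin.ne hM
      _ = (∫⁻ ω, ENNReal.ofReal (-(Y 0 ω)) ∂μ).toReal := by rw [hYneg]
  -- SLLN for Y
  have hYindep : Pairwise (Function.onFun (IndepFun · · μ) Y) := by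
    intro i j hij
    exact (hindep.comp (fun _ => truncLog M) (fun _ => truncLog_measurable M)).indepFun hij
  have hYident : ∀ i, IdentDistrib (Y i) (Y 0) μ μ := by
    intro i
    refine ⟨(hYmeas i).aemeasurable, (hYmeas 0).aemeasurable, ?_⟩
    show μ.map (truncLog M ∘ X i) = μ.map (truncLog M ∘ X 0)
    rw [← Measure.map_map (truncLog_measurable M) (hmeas i), hid i,
      Measure.map_map (truncLog_measurable M) (hmeas 0)]
  have hslln := strong_law_ae_real Y hYint hYindep hYident
  filter_upwards [hslln] with ω hω
  set L : ℝ := μ[Y 0] with hL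
  have hL2 : L / 2 < 0 := by linarith
  have hev : ∀ᶠ n : ℕ in atTop, (∑ i ∈ Finset.range n, Y i ω) / n < L / 2 :=
    hω.eventually_lt_const (by linarith)
  set r : ℝ := Real.exp (L / 2) with hr
  have hr1 : r < 1 := Real.exp_lt_one_iff.2 hL2
  refine summable_of_isBigO_nat (summable_geometric_of_lt_one (Real.exp_pos _).le hr1) ?_
  rw [Asymptotics.isBigO_iff]
  refine ⟨1, ?_⟩
  filter_upwards [hev, eventually_ge_atTop 1] with k hk hk1
  have hkpos : (0:ℝ) < k := by exact_mod_cast hk1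
  have hsum : (∑ i ∈ Finset.range k, Y i ω) < (L / 2) * k := by
    rw [div_lt_iff₀ hkpos] at hk
    exact hk
  have hprod : (∏ ℓ ∈ Finset.range k, X ℓ ω) ≤ r ^ k := by
    calc (∏ ℓ ∈ Finset.range k, X ℓ ω)
        ≤ ∏ ℓ ∈ Finset.range k, max (X ℓ ω) (Real.exp (-(M : ℝ))) :=
          Finset.prod_le_prod (fun ℓ _ => hpos ℓ ω) (fun ℓ _ => le_max_left _ _)
      _ = ∏ ℓ ∈ Finset.range k, Real.exp (Y ℓ ω) := by
          refine Finset.prod_congr rfl fun ℓ _ => ?_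
          rw [hY]
          exact (Real.exp_log (lt_max_of_lt_right (Real.exp_pos _))).symm
      _ = Real.exp (∑ ℓ ∈ Finset.range k, Y ℓ ω) := (Real.exp_sum _ _).symm
      _ ≤ Real.exp ((L / 2) * k) := Real.exp_le_exp.2 hsum.le
      _ = r ^ k := by rw [hr, ← Real.exp_nat_mul]; ring_nf
  have hprodpos : (0:ℝ) ≤ ∏ ℓ ∈ Finset.range k, X ℓ ω :=
    Finset.prod_nonneg fun ℓ _ => hpos ℓ ω
  rw [Real.norm_eq_abs, Real.norm_eq_abs, abs_of_nonneg hprodpos,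
    abs_of_nonneg (pow_nonneg (Real.exp_pos _).le k), one_mul]
  exact hprod
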